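/- Let g ≥ 4, let X be a set, and let ω₁,…,ω_g : X → ℂ be functions such that the ℂ-linear span of the pointwise products ω_i·ω_j (1 ≤ i ≤ j ≤ g) has dimension at most 3g−3. Fix points p₁,…,p_g ∈ X and q₁,…,q_{2g−2} ∈ X and a pair (k,l) with 3 ≤ k < l ≤ g. Then for every r ∈ {1,…,2g−2} and every z ∈ X, the relation Σ_{i,j=1}^g det A_{ij,r}(k,l) · ω_i(z) ω_j(z) = 0 holds. -/

import Mathlib

/-- `detOm g ω x` is the determinant of the `g × g` matrix with `(i,j)`-entry
`ω_i(x_j)` (all indices 1-based). -/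
noncomputable def detOm {X : Type*} (g : ℕ) (ω : ℕ → X → ℂ) (x : ℕ → X) : ℂ :=
  (Matrix.of fun a b : Fin g => ω ((a : ℕ) + 1) (x ((b : ℕ) + 1))).det

/-- Replace the `i`-th point (1-based) of the tuple `p` by `y`. -/
def updPt {X : Type*} (p : ℕ → X) (i : ℕ) (y : X) : ℕ → X :=
  fun m => if m = i then y else p m

/-- `a_{ij,r} = det ω(p₁,…,q_r,…,p_g) ⬝ det ω(p₁,…,q_r,…,p_g)` with `q_r` in the
`i`-th resp. `j`-th slot. -/
noncomputable def aCoef {X : Type*} (g : ℕ) (ω : ℕ → X → ℂ) (p q : ℕ → X)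
    (i j r : ℕ) : ℂ :=
  detOm g ω (updPt p i (q r)) * detOm g ω (updPt p j (q r))

/-- The pair `(m,n)` indexing the `c`-th column (1-based, `c = 1,…,2g-2`) of the
matrix `A(k,l)`: the pairs are `(1,2),…,(1,g),(2,3),…,(2,g),(k,l)`. -/
def colPair (g k l c : ℕ) : ℕ × ℕ :=
  if c ≤ g - 1 then (1, c + 1)
  else if c ≤ 2 * g - 3 then (2, c - g + 3)
  else (k, l)

/-- On a 0-based index `a ∈ {0,…,g-2}`, the 1-based index obtained by skipping
the 1-based index `t` in `{1,…,g}`; used to delete a row/column. -/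
def skipIdx (t a : ℕ) : ℕ := if a + 1 < t then a + 1 else a + 2

/-- The cofactor `D_{mn} = (-1)^{m+n} det_{i ≠ m, j ≠ n} ω_j(p_i)` (1-based `m,n`). -/
noncomputable def Dcof {X : Type*} (g : ℕ) (ω : ℕ → X → ℂ) (p : ℕ → X) (m n : ℕ) : ℂ :=
  (-1) ^ (m + n) *
    (Matrix.of fun a b : Fin (g - 1) =>
      ω (skipIdx n (b : ℕ)) (p (skipIdx m (a : ℕ)))).det

/-- The matrix `A_{ij,r}(k,l)`, obtained from `A(k,l)` by replacing the `r`-th row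
(1-based `r`) with the row whose entry in the column indexed by `(m,n)` is
`D_{mi} D_{nj}`. -/
noncomputable def AmatRepl {X : Type*} (g : ℕ) (ω : ℕ → X → ℂ) (p q : ℕ → X)
    (k l i j r : ℕ) : Matrix (Fin (2 * g - 2)) (Fin (2 * g - 2)) ℂ :=
  Matrix.of fun r' c =>
    if (r' : ℕ) + 1 = r then
      Dcof g ω p (colPair g k l ((c : ℕ) + 1)).1 i * Dcof g ω p (colPair g k l ((c : ℕ) + 1)).2 j
    else
      aCoef g ω p q (colPair g k l ((c : ℕ) + 1)).1 (colPair g k l ((c : ℕ) + 1)).2 ((r' : ℕ) + 1)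

lemma sum_Icc_one {M : Type*} [AddCommMonoid M] (g : ℕ) (f : ℕ → M) :
    ∑ i ∈ Finset.Icc 1 g, f i = ∑ i : Fin g, f ((i : ℕ) + 1) := by
  rw [Fin.sum_univ_eq_sum_range (fun i => f (i + 1)) g, ← Finset.Ico_add_one_right_eq_Icc,
    Finset.sum_Ico_eq_sum_range]
  simp [Nat.add_comm]

lemma coe_succAbove_skip {n : ℕ} (t : ℕ) (ht1 : 1 ≤ t) (htn : t ≤ n + 1)
    (b : Fin n) :
    ((⟨t - 1, by omega⟩ : Fin (n + 1)).succAbove b : ℕ) + 1 = skipIdx t b := by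
  by_cases h : (b : ℕ) + 1 < t
  · rw [Fin.succAbove_of_castSucc_lt _ _ (by simp [Fin.lt_def]; omega)]
    simp [skipIdx, h]
  · rw [Fin.succAbove_of_le_castSucc _ _ (by simp [Fin.le_def]; omega)]
    simp [skipIdx, h]

lemma skipIdx_ne {t a : ℕ} : skipIdx t a ≠ t := by
  unfold skipIdx; split <;> omega

lemma skipIdx_mem {n t : ℕ} (a : Fin n) (ht : t ≤ n + 1) :
    1 ≤ skipIdx t (a : ℕ) ∧ skipIdx t (a : ℕ) ≤ n + 1 := by
  have := a.isLt; unfold skipIdx; split <;> omega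

/-- Cofactor expansion of `detOm` along the updated column. -/
lemma d_expand {X : Type*} (n : ℕ) (ω : ℕ → X → ℂ) (p : ℕ → X) (m : ℕ)
    (hm1 : 1 ≤ m) (hm : m ≤ n + 1) (z : X) :
    detOm (n + 1) ω (updPt p m z) =
      ∑ i : Fin (n + 1), Dcof (n + 1) ω p m ((i : ℕ) + 1) * ω ((i : ℕ) + 1) z := by
  set j : Fin (n + 1) := ⟨m - 1, by omega⟩ with hj
  rw [detOm, Matrix.det_succ_column _ j]
  refine Finset.sum_congr rfl fun i _ => ?_
  have hjm : (j : ℕ) + 1 = m := by simp [hj]; omega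
  have hAij : (Matrix.of fun a b : Fin (n+1) => ω ((a : ℕ) + 1) (updPt p m z ((b : ℕ) + 1))) i j
      = ω ((i : ℕ) + 1) z := by
    simp [updPt, hjm]
  have hsub : ((Matrix.of fun a b : Fin (n+1) =>
        ω ((a : ℕ) + 1) (updPt p m z ((b : ℕ) + 1))).submatrix i.succAbove j.succAbove).det
      = (Matrix.of fun a b : Fin ((n+1) - 1) =>
          ω (skipIdx ((i : ℕ) + 1) (b : ℕ)) (p (skipIdx m (a : ℕ)))).det := by
    rw [← Matrix.det_transpose]
    congr 1
    ext a b
    have h1 : ((j.succAbove a : Fin (n+1)) : ℕ) + 1 = skipIdx m (a : ℕ) := by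
      have := coe_succAbove_skip (n := n) m hm1 hm a
      convert this using 3
    have h2 : ((i.succAbove b : Fin (n+1)) : ℕ) + 1 = skipIdx ((i : ℕ) + 1) (b : ℕ) := by
      have := coe_succAbove_skip (n := n) ((i : ℕ) + 1) (by omega) (by omega) b
      have hi : (⟨(i : ℕ) + 1 - 1, by omega⟩ : Fin (n+1)) = i := by ext; simp
      rwa [hi] at this
    simp only [Matrix.transpose_apply, Matrix.submatrix_apply, Matrix.of_apply]
    rw [h1, h2]
    have : skipIdx m (a : ℕ) ≠ m := skipIdx_ne
    simp [updPt, this]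
  rw [hAij, hsub, Dcof]
  have hsign : ((-1 : ℂ)) ^ ((i : ℕ) + (j : ℕ)) = (-1) ^ (m + ((i : ℕ) + 1)) := by
    have h2 : m + ((i : ℕ) + 1) = ((i : ℕ) + (j : ℕ)) + 2 := by simp [hj]; omega
    rw [h2, pow_add, pow_add, pow_add, neg_one_sq, mul_one]
  rw [hsign]; ring

lemma updPt_self {X : Type*} (p : ℕ → X) (m : ℕ) : updPt p m (p m) = p := by
  funext x; simp only [updPt]; split <;> simp_all

lemma d_eval_ne {X : Type*} (n : ℕ) (ω : ℕ → X → ℂ) (p : ℕ → X) {m t : ℕ}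
    (hm1 : 1 ≤ m) (hm : m ≤ n + 1) (ht1 : 1 ≤ t) (ht : t ≤ n + 1) (hmt : m ≠ t) :
    detOm (n + 1) ω (updPt p m (p t)) = 0 := by
  apply Matrix.det_zero_of_column_eq
    (i := (⟨m - 1, by omega⟩ : Fin (n+1))) (j := (⟨t - 1, by omega⟩ : Fin (n+1)))
  · simp only [ne_eq, Fin.mk.injEq]; omega
  · intro a
    have h1 : (m - 1) + 1 = m := by omega
    have h2 : (t - 1) + 1 = t := by omega
    simp [updPt, h1, h2, hmt, (Ne.symm hmt)]

/-- Evaluation of `d m` at all the base points `p t` when `det = 0` is zero. -/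
lemma d_eval_zero {X : Type*} (n : ℕ) (ω : ℕ → X → ℂ) (p : ℕ → X)
    (hdet : detOm (n + 1) ω p = 0) {m t : ℕ}
    (hm1 : 1 ≤ m) (hm : m ≤ n + 1) (ht1 : 1 ≤ t) (ht : t ≤ n + 1) :
    detOm (n + 1) ω (updPt p m (p t)) = 0 := by
  by_cases hmt : m = t
  · subst hmt; rw [updPt_self]; exact hdet
  · exact d_eval_ne n ω p hm1 hm ht1 ht hmt

/-- In the degenerate case the functions `d m` have a rank-one factorization. -/
lemma rank_one {X : Type*} (n : ℕ) (ω : ℕ → X → ℂ) (p : ℕ → X)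
    (hdet : detOm (n + 1) ω p = 0) :
    ∃ u : ℕ → ℂ, ∃ h : X → ℂ, ∀ m, 1 ≤ m → m ≤ n + 1 → ∀ z,
      detOm (n + 1) ω (updPt p m z) = u m * h z := by
  by_cases hD : ∀ m, 1 ≤ m → m ≤ n + 1 → ∀ i, 1 ≤ i → i ≤ n + 1 → Dcof (n+1) ω p m i = 0
  · refine ⟨0, 0, fun m hm1 hm z => ?_⟩
    rw [d_expand n ω p m hm1 hm z]
    simp only [Pi.zero_apply, zero_mul]
    apply Finset.sum_eq_zero
    intro i _
    rw [hD m hm1 hm ((i : ℕ) + 1) (by omega) (by omega), zero_mul]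
  · push_neg at hD
    obtain ⟨m₀, hm₀1, hm₀, i₀, hi₀1, hi₀, hD0⟩ := hD
    -- kernel injectivity
    have hker : ∀ x : Fin (n+1) → ℂ,
        (∀ a : Fin (n+1), ∑ b : Fin (n+1), ω ((b:ℕ)+1) (p ((a:ℕ)+1)) * x b = 0) →
        x ⟨i₀ - 1, by omega⟩ = 0 → x = 0 := by
      intro x hx hx0
      set j₀ : Fin (n+1) := ⟨i₀ - 1, by omega⟩ with hj₀
      set a₀ : Fin (n+1) := ⟨m₀ - 1, by omega⟩ with ha₀
      have hNdet : (Matrix.of fun a b : Fin n =>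
          ω (skipIdx i₀ (b:ℕ)) (p (skipIdx m₀ (a:ℕ)))).det ≠ 0 := by
        intro h0
        apply hD0
        rw [Dcof]
        have : (Matrix.of fun a b : Fin ((n+1)-1) =>
            ω (skipIdx i₀ (b:ℕ)) (p (skipIdx m₀ (a:ℕ)))).det
            = (Matrix.of fun a b : Fin n =>
            ω (skipIdx i₀ (b:ℕ)) (p (skipIdx m₀ (a:ℕ)))).det := rfl
        rw [this, h0, mul_zero]
      have hmul : (Matrix.of fun a b : Fin n =>
          ω (skipIdx i₀ (b:ℕ)) (p (skipIdx m₀ (a:ℕ)))).mulVec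
            (fun b => x (j₀.succAbove b)) = 0 := by
        funext a
        have key := hx ⟨skipIdx m₀ (a:ℕ) - 1, by
          have := (skipIdx_mem (t := m₀) a (by omega)); omega⟩
        have hco : (skipIdx m₀ (a:ℕ) - 1) + 1 = skipIdx m₀ (a:ℕ) := by
          have := (skipIdx_mem (t := m₀) a (by omega)); omega
        rw [hco] at key
        rw [Fin.sum_univ_succAbove _ j₀] at key
        have hj₀c : (j₀ : ℕ) + 1 = i₀ := by simp [hj₀]; omega
        rw [hj₀c, hx0, mul_zero, zero_add] at key
        simp only [Matrix.mulVec, dotProduct, Matrix.of_apply, Pi.zero_apply]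
        rw [← key]
        refine Finset.sum_congr rfl fun b _ => ?_
        have hb : ((j₀.succAbove b : Fin (n+1)) : ℕ) + 1 = skipIdx i₀ (b : ℕ) := by
          have := coe_succAbove_skip (n := n) i₀ hi₀1 hi₀ b
          convert this using 3
        rw [hb]
      have hx' : (fun b => x (j₀.succAbove b)) = 0 :=
        Matrix.eq_zero_of_mulVec_eq_zero hNdet hmul
      funext c
      by_cases hc : c = j₀
      · rw [hc]; exact hx0
      · obtain ⟨b, hb⟩ := Fin.exists_succAbove_eq hc
        rw [← hb]
        exact congrFun hx' b
    -- minor identities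
    have hminor : ∀ m, 1 ≤ m → m ≤ n + 1 → ∀ b : Fin (n+1),
        Dcof (n+1) ω p m₀ i₀ * Dcof (n+1) ω p m ((b:ℕ)+1)
          = Dcof (n+1) ω p m i₀ * Dcof (n+1) ω p m₀ ((b:ℕ)+1) := by
      intro m hm1 hm b
      have hx := hker (fun b => Dcof (n+1) ω p m₀ i₀ * Dcof (n+1) ω p m ((b:ℕ)+1)
          - Dcof (n+1) ω p m i₀ * Dcof (n+1) ω p m₀ ((b:ℕ)+1)) ?_ ?_
      · have := congrFun hx b
        simpa [sub_eq_zero] using this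
      · intro a
        have e1 := d_expand n ω p m hm1 hm (p ((a:ℕ)+1))
        have e2 := d_expand n ω p m₀ hm₀1 hm₀ (p ((a:ℕ)+1))
        have z1 : detOm (n+1) ω (updPt p m (p ((a:ℕ)+1))) = 0 :=
          d_eval_zero n ω p hdet hm1 hm (by omega) (by omega)
        have z2 : detOm (n+1) ω (updPt p m₀ (p ((a:ℕ)+1))) = 0 :=
          d_eval_zero n ω p hdet hm₀1 hm₀ (by omega) (by omega)
        rw [z1] at e1; rw [z2] at e2
        have : ∑ b : Fin (n+1), ω ((b:ℕ)+1) (p ((a:ℕ)+1)) *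
            (Dcof (n+1) ω p m₀ i₀ * Dcof (n+1) ω p m ((b:ℕ)+1)
              - Dcof (n+1) ω p m i₀ * Dcof (n+1) ω p m₀ ((b:ℕ)+1))
            = Dcof (n+1) ω p m₀ i₀ *
                (∑ b : Fin (n+1), Dcof (n+1) ω p m ((b:ℕ)+1) * ω ((b:ℕ)+1) (p ((a:ℕ)+1)))
              - Dcof (n+1) ω p m i₀ *
                (∑ b : Fin (n+1), Dcof (n+1) ω p m₀ ((b:ℕ)+1) * ω ((b:ℕ)+1) (p ((a:ℕ)+1))) := by
          rw [Finset.mul_sum, Finset.mul_sum, ← Finset.sum_sub_distrib]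
          exact Finset.sum_congr rfl fun b _ => by ring
        rw [this, ← e1, ← e2, mul_zero, mul_zero, sub_zero]
      · have : ((⟨i₀ - 1, by omega⟩ : Fin (n+1)) : ℕ) + 1 = i₀ := by simp; omega
        simp only [this]
        ring
    refine ⟨fun m => Dcof (n+1) ω p m i₀ / Dcof (n+1) ω p m₀ i₀,
      fun z => detOm (n+1) ω (updPt p m₀ z), fun m hm1 hm z => ?_⟩
    simp only
    rw [d_expand n ω p m hm1 hm z, d_expand n ω p m₀ hm₀1 hm₀ z, Finset.mul_sum]
    refine Finset.sum_congr rfl fun i _ => ?_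
    have h := hminor m hm1 hm i
    field_simp
    linear_combination ω ((i : ℕ) + 1) z * h

lemma colPair_spec (g k l c : ℕ) (hg : 4 ≤ g) (hk : 3 ≤ k) (hkl : k < l) (hl : l ≤ g)
    (hc1 : 1 ≤ c) (hc2 : c ≤ 2 * g - 2) :
    1 ≤ (colPair g k l c).1 ∧ (colPair g k l c).1 < (colPair g k l c).2 ∧
      (colPair g k l c).2 ≤ g := by
  unfold colPair
  split_ifs with h1 h2 <;> refine ⟨?_, ?_, ?_⟩ <;> simp <;> omega

/-- membership of products of the `d` functions in the span of products of `ω`s. -/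
lemma prod_mem_span {X : Type*} (n : ℕ) (ω : ℕ → X → ℂ) (p : ℕ → X)
    (m nn : ℕ) (h1 : 1 ≤ m) (h2 : m ≤ n + 1) (h3 : 1 ≤ nn) (h4 : nn ≤ n + 1) :
    (fun z => detOm (n+1) ω (updPt p m z) * detOm (n+1) ω (updPt p nn z)) ∈
      Submodule.span ℂ {f : X → ℂ | ∃ i j, 1 ≤ i ∧ i ≤ j ∧ j ≤ n + 1 ∧
        f = fun z => ω i z * ω j z} := by
  have key : (fun z => detOm (n+1) ω (updPt p m z) * detOm (n+1) ω (updPt p nn z))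
      = ∑ i : Fin (n+1), ∑ j : Fin (n+1),
          (Dcof (n+1) ω p m ((i:ℕ)+1) * Dcof (n+1) ω p nn ((j:ℕ)+1)) •
            (fun z => ω ((i:ℕ)+1) z * ω ((j:ℕ)+1) z) := by
    funext z
    simp only [Finset.sum_apply, Pi.smul_apply, smul_eq_mul]
    rw [d_expand n ω p m h1 h2 z, d_expand n ω p nn h3 h4 z, Finset.sum_mul_sum]
    exact Finset.sum_congr rfl fun i _ => Finset.sum_congr rfl fun j _ => by ring
  rw [key]
  refine Submodule.sum_mem _ fun i _ => Submodule.sum_mem _ fun j _ =>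
    Submodule.smul_mem _ _ (Submodule.subset_span ?_)
  by_cases hij : (i : ℕ) ≤ (j : ℕ)
  · exact ⟨(i:ℕ)+1, (j:ℕ)+1, by omega, by omega, by omega, rfl⟩
  · exact ⟨(j:ℕ)+1, (i:ℕ)+1, by omega, by omega, by omega, by
      funext z; simp [mul_comm]⟩

lemma exists_lam {X : Type*} (n : ℕ) (hn : 3 ≤ n) (ω : ℕ → X → ℂ)
    (hspan : Module.finrank ℂ
      (Submodule.span ℂ {f : X → ℂ | ∃ i j, 1 ≤ i ∧ i ≤ j ∧ j ≤ n + 1 ∧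
        f = fun z => ω i z * ω j z}) ≤ 3 * (n + 1) - 3)
    (p : ℕ → X) (k l : ℕ) (hk : 3 ≤ k) (hkl : k < l) (hl : l ≤ n + 1) :
    ∃ lam : Fin (2 * (n + 1) - 2) → ℂ, lam ≠ 0 ∧ ∀ z : X,
      ∑ c : Fin (2 * (n + 1) - 2), lam c *
        (detOm (n+1) ω (updPt p (colPair (n+1) k l ((c:ℕ)+1)).1 z) *
         detOm (n+1) ω (updPt p (colPair (n+1) k l ((c:ℕ)+1)).2 z)) = 0 := by
  have hg : 4 ≤ n + 1 := by omega
  have hcb : ∀ c : Fin (2 * (n + 1) - 2),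
      1 ≤ (colPair (n+1) k l ((c:ℕ)+1)).1 ∧
      (colPair (n+1) k l ((c:ℕ)+1)).1 < (colPair (n+1) k l ((c:ℕ)+1)).2 ∧
      (colPair (n+1) k l ((c:ℕ)+1)).2 ≤ n + 1 := fun c =>
    colPair_spec (n+1) k l ((c:ℕ)+1) hg hk hkl hl (by omega) (by have := c.isLt; omega)
  by_cases hdet : detOm (n+1) ω p = 0
  · -- degenerate case: rank one
    obtain ⟨u, h, hu⟩ := rank_one n ω p hdet
    set γ : Fin (2 * (n + 1) - 2) → ℂ := fun c =>
      u (colPair (n+1) k l ((c:ℕ)+1)).1 * u (colPair (n+1) k l ((c:ℕ)+1)).2 with hγdef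
    have hF : ∀ (c : Fin (2 * (n + 1) - 2)) (z : X),
        detOm (n+1) ω (updPt p (colPair (n+1) k l ((c:ℕ)+1)).1 z) *
          detOm (n+1) ω (updPt p (colPair (n+1) k l ((c:ℕ)+1)).2 z)
        = γ c * (h z * h z) := by
      intro c z
      obtain ⟨hb1, hb2, hb3⟩ := hcb c
      rw [hu _ hb1 (by omega) z, hu _ (by omega) hb3 z, hγdef]
      ring
    by_cases hγ0 : ∀ c, γ c = 0
    · refine ⟨fun c => if c = ⟨0, by omega⟩ then 1 else 0, ?_, ?_⟩
      · intro h0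
        have := congrFun h0 ⟨0, by omega⟩
        simp at this
      · intro z
        refine Finset.sum_eq_zero fun c _ => ?_
        rw [hF c z, hγ0 c, zero_mul, mul_zero]
    · push_neg at hγ0
      obtain ⟨c₀, hc₀⟩ := hγ0
      obtain ⟨c₁, hc₁⟩ : ∃ c₁ : Fin (2 * (n + 1) - 2), c₁ ≠ c₀ := by
        by_cases h0 : (c₀ : ℕ) = 0
        · exact ⟨⟨1, by omega⟩, by intro he; rw [← he] at h0; simp at h0⟩
        · exact ⟨⟨0, by omega⟩, by intro he; rw [← he] at h0; simp at h0⟩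
      refine ⟨fun c => (if c = c₀ then γ c₁ else 0) - (if c = c₁ then γ c₀ else 0), ?_, ?_⟩
      · intro h0
        have := congrFun h0 c₁
        simp [hc₁] at this
        exact hc₀ this
      · intro z
        simp only [sub_mul, Finset.sum_sub_distrib, ite_mul, zero_mul]
        rw [Finset.sum_ite_eq' Finset.univ c₀, Finset.sum_ite_eq' Finset.univ c₁]
        simp only [Finset.mem_univ, if_true]
        rw [hF c₀ z, hF c₁ z]
        ring
  · -- nondegenerate case: dimension count
    set S := Submodule.span ℂ {f : X → ℂ | ∃ i j, 1 ≤ i ∧ i ≤ j ∧ j ≤ n + 1 ∧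
        f = fun z => ω i z * ω j z} with hSdef
    have hfin : FiniteDimensional ℂ S := by
      apply FiniteDimensional.span_of_finite
      have hsub : {f : X → ℂ | ∃ i j, 1 ≤ i ∧ i ≤ j ∧ j ≤ n + 1 ∧
          f = fun z => ω i z * ω j z} ⊆
          (fun ij : ℕ × ℕ => fun z => ω ij.1 z * ω ij.2 z) ''
            (Set.Icc 1 (n+1) ×ˢ Set.Icc 1 (n+1)) := by
        rintro f ⟨i, j, h1, h2, h3, rfl⟩
        exact ⟨(i, j), ⟨⟨h1, by omega⟩, ⟨by omega, h3⟩⟩, rfl⟩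
      exact Set.Finite.subset
        (Set.Finite.image _ ((Set.finite_Icc _ _).prod (Set.finite_Icc _ _))) hsub
    set vfun : (Fin (2 * (n + 1) - 2) ⊕ Fin (n + 1)) → (X → ℂ) := fun t =>
      match t with
      | .inl c => fun z => detOm (n+1) ω (updPt p (colPair (n+1) k l ((c:ℕ)+1)).1 z) *
          detOm (n+1) ω (updPt p (colPair (n+1) k l ((c:ℕ)+1)).2 z)
      | .inr s => fun z => detOm (n+1) ω (updPt p ((s:ℕ)+1) z) *
          detOm (n+1) ω (updPt p ((s:ℕ)+1) z) with hvdef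
    have hvmem : ∀ t, vfun t ∈ S := by
      rintro (c | s)
      · obtain ⟨hb1, hb2, hb3⟩ := hcb c
        exact prod_mem_span n ω p _ _ hb1 (by omega) (by omega) hb3
      · exact prod_mem_span n ω p _ _ (by omega) (by have := s.isLt; omega)
          (by omega) (by have := s.isLt; omega)
    set v : (Fin (2 * (n + 1) - 2) ⊕ Fin (n + 1)) → S := fun t => ⟨vfun t, hvmem t⟩ with hv
    have hnli : ¬ LinearIndependent ℂ v := by
      intro hli
      have hcard := hli.fintype_card_le_finrank
      rw [Fintype.card_sum, Fintype.card_fin, Fintype.card_fin] at hcard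
      omega
    rw [Fintype.not_linearIndependent_iff] at hnli
    obtain ⟨gg, hsum, t0, ht0⟩ := hnli
    have hfun : ∀ z, ∑ t, gg t * vfun t z = 0 := by
      intro z
      have hcoe : ((∑ t, gg t • v t : S) : X → ℂ) = ∑ t, gg t • vfun t := by
        rw [← Submodule.coe_subtype, map_sum]
        exact Finset.sum_congr rfl fun t _ => rfl
      have := congrFun (hcoe.symm.trans (congrArg _ hsum)) z
      simpa [Finset.sum_apply] using this
    have hinr : ∀ s : Fin (n + 1), gg (.inr s) = 0 := by
      intro s
      have hz := hfun (p ((s:ℕ)+1))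
      rw [Fintype.sum_sum_type] at hz
      have hzero1 : ∑ c : Fin (2 * (n + 1) - 2), gg (.inl c) * vfun (.inl c) (p ((s:ℕ)+1))
          = 0 := by
        refine Finset.sum_eq_zero fun c _ => ?_
        obtain ⟨hb1, hb2, hb3⟩ := hcb c
        show gg (.inl c) * (detOm (n+1) ω (updPt p _ (p ((s:ℕ)+1))) *
          detOm (n+1) ω (updPt p _ (p ((s:ℕ)+1)))) = 0
        by_cases he : (colPair (n+1) k l ((c:ℕ)+1)).1 = (s:ℕ)+1
        · rw [d_eval_ne n ω p (by omega) hb3 (by omega) (by have := s.isLt; omega)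
            (by omega), mul_zero, mul_zero]
        · rw [d_eval_ne n ω p hb1 (by omega) (by omega) (by have := s.isLt; omega) he,
            zero_mul, mul_zero]
      have hzero2 : ∑ s' : Fin (n + 1), gg (.inr s') * vfun (.inr s') (p ((s:ℕ)+1))
          = gg (.inr s) * (detOm (n+1) ω p * detOm (n+1) ω p) := by
        rw [Finset.sum_eq_single s]
        · show gg (.inr s) * (detOm (n+1) ω (updPt p ((s:ℕ)+1) (p ((s:ℕ)+1))) *
            detOm (n+1) ω (updPt p ((s:ℕ)+1) (p ((s:ℕ)+1)))) = _
          rw [updPt_self]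
        · intro s' _ hs'
          show gg (.inr s') * (detOm (n+1) ω (updPt p ((s':ℕ)+1) (p ((s:ℕ)+1))) *
            detOm (n+1) ω (updPt p ((s':ℕ)+1) (p ((s:ℕ)+1)))) = 0
          rw [d_eval_ne n ω p (by omega) (by have := s'.isLt; omega) (by omega)
            (by have := s.isLt; omega) (by intro he; apply hs'; ext; omega),
            zero_mul, mul_zero]
        · intro hs; exact absurd (Finset.mem_univ s) hs
      rw [hzero1, hzero2, zero_add] at hz
      rcases mul_eq_zero.mp hz with h0 | h0
      · exact h0
      · exact absurd (mul_self_eq_zero.mp h0) hdet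
    refine ⟨fun c => gg (.inl c), ?_, ?_⟩
    · intro h0
      cases t0 with
      | inl c => exact ht0 (congrFun h0 c)
      | inr s => exact ht0 (hinr s)
    · intro z
      have hz := hfun z
      rw [Fintype.sum_sum_type] at hz
      have hzero2 : ∑ s : Fin (n + 1), gg (.inr s) * vfun (.inr s) z = 0 :=
        Finset.sum_eq_zero fun s _ => by rw [hinr s, zero_mul]
      rw [hzero2, add_zero] at hz
      exact hz

lemma det_updateRow_sum' {N : ℕ} {ι : Type*} [DecidableEq ι]
    (A : Matrix (Fin N) (Fin N) ℂ) (j : Fin N)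
    (s : Finset ι) (c : ι → ℂ) (u : ι → Fin N → ℂ) :
    (A.updateRow j (∑ i ∈ s, c i • u i)).det = ∑ i ∈ s, c i * (A.updateRow j (u i)).det := by
  induction s using Finset.induction_on with
  | empty =>
      rw [Finset.sum_empty, Finset.sum_empty]
      have h0 : (0 : Fin N → ℂ) = (0 : ℂ) • (fun _ => (0 : ℂ)) := by simp
      rw [h0, Matrix.det_updateRow_smul]
      simp
  | insert _ _ hk ih =>
      rw [Finset.sum_insert hk, Matrix.det_updateRow_add, Matrix.det_updateRow_smul, ih,
        Finset.sum_insert hk]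

/-- **Corollary 2.2** (undivided form). For every `r ∈ {1,…,2g-2}` and every `z`,
`∑_{i,j=1}^g det A_{ij,r}(k,l) ⬝ ω_i(z) ω_j(z) = 0`. -/
theorem relations_on_products {X : Type*} (g : ℕ) (hg : 4 ≤ g) (ω : ℕ → X → ℂ)
    (hspan : Module.finrank ℂ
      (Submodule.span ℂ {f : X → ℂ | ∃ i j, 1 ≤ i ∧ i ≤ j ∧ j ≤ g ∧
        f = fun z => ω i z * ω j z}) ≤ 3 * g - 3)
    (p q : ℕ → X) (k l : ℕ) (hk : 3 ≤ k) (hkl : k < l) (hl : l ≤ g) :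
    ∀ r ∈ Finset.Icc 1 (2 * g - 2), ∀ z : X,
      ∑ i ∈ Finset.Icc 1 g, ∑ j ∈ Finset.Icc 1 g,
        (AmatRepl g ω p q k l i j r).det * (ω i z * ω j z) = 0 := by
  intro r hr z
  rw [Finset.mem_Icc] at hr
  obtain ⟨n, rfl⟩ : ∃ n, g = n + 1 := ⟨g - 1, by omega⟩
  have hn : 3 ≤ n := by omega
  set r0 : Fin (2 * (n + 1) - 2) := ⟨r - 1, by omega⟩ with hr0
  set A0 : Matrix (Fin (2 * (n + 1) - 2)) (Fin (2 * (n + 1) - 2)) ℂ :=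
    Matrix.of fun r' c =>
      aCoef (n+1) ω p q (colPair (n+1) k l ((c:ℕ)+1)).1
        (colPair (n+1) k l ((c:ℕ)+1)).2 ((r':ℕ)+1) with hA0
  have hA : ∀ i j : ℕ, AmatRepl (n+1) ω p q k l i j r = A0.updateRow r0
      (fun c => Dcof (n+1) ω p (colPair (n+1) k l ((c:ℕ)+1)).1 i *
        Dcof (n+1) ω p (colPair (n+1) k l ((c:ℕ)+1)).2 j) := by
    intro i j
    ext r' c
    have hiff : ((r' : ℕ) + 1 = r) ↔ r' = r0 := by
      rw [Fin.ext_iff]; simp only [hr0]; omega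
    simp only [AmatRepl, Matrix.of_apply, Matrix.updateRow_apply, hA0]
    by_cases h : (r' : ℕ) + 1 = r
    · rw [if_pos h, if_pos (hiff.mp h)]
    · rw [if_neg h, if_neg (fun hc => h (hiff.mpr hc))]
  simp only [hA]
  have step1 : ∑ i ∈ Finset.Icc 1 (n+1), ∑ j ∈ Finset.Icc 1 (n+1),
      (A0.updateRow r0 (fun c => Dcof (n+1) ω p (colPair (n+1) k l ((c:ℕ)+1)).1 i *
        Dcof (n+1) ω p (colPair (n+1) k l ((c:ℕ)+1)).2 j)).det * (ω i z * ω j z)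
      = ∑ ij ∈ Finset.Icc 1 (n+1) ×ˢ Finset.Icc 1 (n+1), (ω ij.1 z * ω ij.2 z) *
        (A0.updateRow r0 (fun c => Dcof (n+1) ω p (colPair (n+1) k l ((c:ℕ)+1)).1 ij.1 *
          Dcof (n+1) ω p (colPair (n+1) k l ((c:ℕ)+1)).2 ij.2)).det := by
    rw [Finset.sum_product]
    exact Finset.sum_congr rfl fun i _ => Finset.sum_congr rfl fun j _ => mul_comm _ _
  rw [step1, ← det_updateRow_sum' A0 r0 (Finset.Icc 1 (n+1) ×ˢ Finset.Icc 1 (n+1))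
    (fun ij => ω ij.1 z * ω ij.2 z)
    (fun ij => fun c : Fin (2 * (n + 1) - 2) =>
      Dcof (n+1) ω p (colPair (n+1) k l ((c:ℕ)+1)).1 ij.1 *
      Dcof (n+1) ω p (colPair (n+1) k l ((c:ℕ)+1)).2 ij.2)]
  have hrow : (∑ ij ∈ Finset.Icc 1 (n+1) ×ˢ Finset.Icc 1 (n+1), (ω ij.1 z * ω ij.2 z) •
      (fun c : Fin (2 * (n + 1) - 2) =>
        Dcof (n+1) ω p (colPair (n+1) k l ((c:ℕ)+1)).1 ij.1 *
        Dcof (n+1) ω p (colPair (n+1) k l ((c:ℕ)+1)).2 ij.2))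
      = fun c : Fin (2 * (n + 1) - 2) =>
        detOm (n+1) ω (updPt p (colPair (n+1) k l ((c:ℕ)+1)).1 z) *
        detOm (n+1) ω (updPt p (colPair (n+1) k l ((c:ℕ)+1)).2 z) := by
    funext c
    have hcb := colPair_spec (n+1) k l ((c:ℕ)+1) (by omega) hk hkl hl (by omega)
      (by have := c.isLt; omega)
    rw [d_expand n ω p _ hcb.1 (by omega) z, d_expand n ω p _ (by omega) hcb.2.2 z,
      Finset.sum_mul_sum]
    simp only [Finset.sum_apply, Pi.smul_apply, smul_eq_mul, Finset.sum_product,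
      sum_Icc_one]
    exact Finset.sum_congr rfl fun i _ => Finset.sum_congr rfl fun j _ => by ring
  rw [hrow]
  obtain ⟨lam, hlamne, hlam⟩ := exists_lam n hn ω hspan p k l hk hkl hl
  apply Matrix.exists_mulVec_eq_zero_iff.mp
  refine ⟨lam, hlamne, ?_⟩
  funext r'
  simp only [Matrix.mulVec, dotProduct, Pi.zero_apply]
  by_cases hr' : r' = r0
  · subst hr'
    simp only [Matrix.updateRow_self]
    rw [← hlam z]
    exact Finset.sum_congr rfl fun c _ => mul_comm _ _
  · rw [show ∑ c, (A0.updateRow r0 _) r' c * lam c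
        = ∑ c, lam c * (detOm (n+1) ω (updPt p (colPair (n+1) k l ((c:ℕ)+1)).1
            (q ((r':ℕ)+1))) * detOm (n+1) ω (updPt p (colPair (n+1) k l ((c:ℕ)+1)).2
            (q ((r':ℕ)+1)))) from Finset.sum_congr rfl fun c _ => by
          rw [Matrix.updateRow_ne hr']
          simp only [hA0, Matrix.of_apply, aCoef]
          ring]
    exact hlam (q ((r':ℕ)+1))
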